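/- Let 0 < R < ∞ and ρ : [0,R] → (0, ρ_O] continuous with ρ(r) > 0 for r < R. Define μ = inf over the class F of ψ ∈ C¹[0,R] with ψ(R) = 0 and |ψ| ≤ M (for a fixed M > 0), ψ ≢ 0, of the Rayleigh quotient [∫₀ᴿ (1/ρ)|ψ'(r)|² r² dr] / [∫₀ᴿ |ψ(r)|² r² dr]. Then μ > 0. -/

import Mathlib

open MeasureTheory Set intervalIntegral

lemma stmt13_quad {x N B : ℝ} (hx : 0 ≤ x) (hN : 0 ≤ N) (hB : 0 ≤ B)
    (h : ∀ t : ℝ, 0 < t → 2 * x ≤ t * N + B / t) : x ^ 2 ≤ N * B := by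
  rcases eq_or_lt_of_le hx with h0 | hx0
  · nlinarith
  rcases eq_or_lt_of_le hN with hN0 | hN0
  · exfalso
    have ht := h ((B + x) / x) (by positivity)
    rw [← hN0] at ht
    rw [div_div_eq_mul_div] at ht
    have e2 : B * x / (B + x) ≤ x := by
      rw [div_le_iff₀ (by positivity)]; nlinarith
    linarith
  · have ht := h (x / N) (by positivity)
    have e1 : (x / N) * N = x := by field_simp
    rw [e1, div_div_eq_mul_div] at ht
    have e3 : x ≤ B * N / x := by linarith
    rw [le_div_iff₀ hx0] at e3
    nlinarith

theorem stmt13 (R ρO M : ℝ) (hR : 0 < R) (hρO : 0 < ρO) (hM : 0 < M)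
    (ρ : ℝ → ℝ) (hρc : ContinuousOn ρ (Icc 0 R))
    (hρ : ∀ r ∈ Icc (0 : ℝ) R, 0 < ρ r ∧ ρ r ≤ ρO) :
    0 < sInf { q : ℝ | ∃ ψ : ℝ → ℂ,
      ContDiffOn ℝ 1 ψ (Icc 0 R) ∧
      ψ R = 0 ∧
      (∀ r ∈ Icc (0 : ℝ) R, ‖ψ r‖ ≤ M) ∧
      (∫ r in (0 : ℝ)..R, ‖ψ r‖ ^ 2 * r ^ 2) ≠ 0 ∧
      q = (∫ r in (0 : ℝ)..R, (1 / ρ r) * ‖derivWithin ψ (Icc 0 R) r‖ ^ 2 * r ^ 2) /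
          (∫ r in (0 : ℝ)..R, ‖ψ r‖ ^ 2 * r ^ 2) } := by
  set S := { q : ℝ | ∃ ψ : ℝ → ℂ,
      ContDiffOn ℝ 1 ψ (Icc 0 R) ∧
      ψ R = 0 ∧
      (∀ r ∈ Icc (0 : ℝ) R, ‖ψ r‖ ≤ M) ∧
      (∫ r in (0 : ℝ)..R, ‖ψ r‖ ^ 2 * r ^ 2) ≠ 0 ∧
      q = (∫ r in (0 : ℝ)..R, (1 / ρ r) * ‖derivWithin ψ (Icc 0 R) r‖ ^ 2 * r ^ 2) /
          (∫ r in (0 : ℝ)..R, ‖ψ r‖ ^ 2 * r ^ 2) } with hS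
  have hRne : R ≠ 0 := ne_of_gt hR
  -- the class is nonempty
  have hne : S.Nonempty := by
    refine ⟨_, fun r => ((M / R * (R - r) : ℝ) : ℂ), ?_, ?_, ?_, ?_, rfl⟩
    · exact (Complex.ofRealCLM.contDiff.comp
        (contDiff_const.mul (contDiff_const.sub contDiff_id))).contDiffOn
    · simp
    · intro r hr
      rw [Complex.norm_real, Real.norm_eq_abs,
        abs_of_nonneg (mul_nonneg (by positivity) (by linarith [hr.2]))]
      have : M / R * (R - r) ≤ M / R * R := by
        apply mul_le_mul_of_nonneg_left (by linarith [hr.1]) (by positivity)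
      rw [div_mul_cancel₀] at this
      · exact this
      · exact hRne
    · have hcont : Continuous fun r : ℝ =>
          ‖((M / R * (R - r) : ℝ) : ℂ)‖ ^ 2 * r ^ 2 := by
        have : Continuous fun r : ℝ => ((M / R * (R - r) : ℝ) : ℂ) :=
          Complex.continuous_ofReal.comp (by continuity)
        exact (this.norm.pow 2).mul (continuous_pow 2)
      refine ne_of_gt (intervalIntegral_pos_of_pos_on
        (hcont.intervalIntegrable 0 R) ?_ hR)
      intro x hx
      have h1 : (0:ℝ) < M / R * (R - x) := by
        have := hx.1; have := hx.2
        apply mul_pos (by positivity) (by linarith)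
      have : ‖((M / R * (R - x) : ℝ) : ℂ)‖ = M / R * (R - x) := by
        rw [Complex.norm_real, Real.norm_eq_abs, abs_of_pos h1]
      rw [this]
      have := hx.1
      positivity
  -- the uniform positive lower bound
  set c : ℝ := 6 / (ρO * R ^ 2) with hc
  have hcpos : 0 < c := by positivity
  have hlow : ∀ q ∈ S, c ≤ q := by
    rintro q ⟨ψ, hψ, hψR, hψM, hDne, rfl⟩
    set g := derivWithin ψ (Icc 0 R) with hg
    set F : ℝ → ℝ := fun s => (1 / ρ s) * ‖g s‖ ^ 2 * s ^ 2 with hF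
    set N : ℝ := ∫ r in (0:ℝ)..R, F r with hN
    set D : ℝ := ∫ r in (0:ℝ)..R, ‖ψ r‖ ^ 2 * r ^ 2 with hD
    have hψcont : ContinuousOn ψ (Icc 0 R) := hψ.continuousOn
    have hgc : ContinuousOn g (Icc 0 R) :=
      hψ.continuousOn_derivWithin (uniqueDiffOn_Icc hR) le_rfl
    have hρne : ∀ s ∈ Icc (0:ℝ) R, ρ s ≠ 0 := fun s hs => ne_of_gt (hρ s hs).1
    have hFc : ContinuousOn F (Icc 0 R) := by
      exact ((continuousOn_const.div hρc hρne).mul ((hgc.norm).pow 2)).mul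
        ((continuousOn_id.pow 2))
    have hFint : ∀ a b : ℝ, a ∈ Icc (0:ℝ) R → b ∈ Icc (0:ℝ) R →
        IntervalIntegrable F volume a b := by
      intro a b ha hb
      exact (hFc.mono (uIcc_subset_Icc ha hb)).intervalIntegrable
    have hF0 : ∀ s ∈ Icc (0:ℝ) R, 0 ≤ F s := by
      intro s hs
      have := (hρ s hs).1
      have h1 : (0:ℝ) ≤ 1 / ρ s := by positivity
      positivity
    have hN0 : 0 ≤ N := intervalIntegral.integral_nonneg hR.le hF0
    have hD0 : 0 < D := by
      refine lt_of_le_of_ne (intervalIntegral.integral_nonneg hR.le ?_) (Ne.symm hDne)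
      intro s hs; positivity
    -- key pointwise bound
    have key : ∀ r ∈ Ioc (0:ℝ) R, ‖ψ r‖ ^ 2 ≤ N * (ρO * (1 / r - 1 / R)) := by
      intro r hr
      obtain ⟨hr0, hrR⟩ := hr
      have hsub : Icc r R ⊆ Icc 0 R := Icc_subset_Icc hr0.le le_rfl
      have huIcc : uIcc r R = Icc r R := uIcc_of_le hrR
      -- FTC
      have hgint : IntervalIntegrable g volume r R := by
        refine (hgc.mono ?_).intervalIntegrable
        rw [huIcc]; exact hsub
      have hftc : ∫ s in r..R, g s = ψ R - ψ r := by
        refine integral_eq_sub_of_hasDeriv_right_of_le hrR (hψcont.mono hsub) ?_ hgint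
        intro x hx
        have hx' : x ∈ Icc (0:ℝ) R := ⟨by linarith [hx.1], hx.2.le⟩
        have hd := ((hψ.differentiableOn one_ne_zero) x hx').hasDerivWithinAt
        exact hd.mono_of_mem_nhdsWithin (nhdsWithin_le_nhds
          (Icc_mem_nhds (by linarith [hx.1]) hx.2))
      have hnorm : ‖ψ r‖ = ‖∫ s in r..R, g s‖ := by
        rw [hftc, hψR, zero_sub, norm_neg]
      -- the inner integral bound ∫_r^R F ≤ N
      have hsplit : (∫ s in (0:ℝ)..r, F s) + (∫ s in r..R, F s) = N :=
        integral_add_adjacent_intervals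
          (hFint 0 r ⟨le_rfl, hR.le⟩ ⟨hr0.le, hrR⟩)
          (hFint r R ⟨hr0.le, hrR⟩ ⟨hR.le, le_rfl⟩)
      have hfirst : 0 ≤ ∫ s in (0:ℝ)..r, F s := by
        refine intervalIntegral.integral_nonneg hr0.le ?_
        intro s hs; exact hF0 s ⟨hs.1, le_trans hs.2 hrR⟩
      have hFle : (∫ s in r..R, F s) ≤ N := by linarith
      -- integral of ρO/s^2
      have hGc : ContinuousOn (fun s : ℝ => ρO / s ^ 2) (Icc r R) := by
        refine continuousOn_const.div (continuousOn_id.pow 2) ?_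
        intro s hs
        have hgt : (0:ℝ) < s := lt_of_lt_of_le hr0 hs.1
        exact pow_ne_zero 2 (ne_of_gt hgt)
      have hGint : IntervalIntegrable (fun s : ℝ => ρO / s ^ 2) volume r R := by
        refine (hGc.mono ?_).intervalIntegrable
        rw [huIcc]
      have hGval : (∫ s in r..R, ρO / s ^ 2) = ρO * (1 / r - 1 / R) := by
        have : ∀ x ∈ uIcc r R, HasDerivAt (fun s : ℝ => -(ρO * s⁻¹)) (ρO / x ^ 2) x := by
          intro x hx
          rw [huIcc] at hx
          have hx0 : x ≠ 0 := ne_of_gt (lt_of_lt_of_le hr0 hx.1)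
          have h1 := ((hasDerivAt_inv hx0).const_mul ρO).neg
          exact h1.congr_deriv (by ring)
        rw [integral_eq_sub_of_hasDerivAt this hGint]
        simp only [one_div]
        ring
      -- parametric AM-GM bound
      have hstep : ∀ t : ℝ, 0 < t →
          2 * ‖ψ r‖ ≤ t * N + (ρO * (1 / r - 1 / R)) / t := by
        intro t ht
        have hpt : ∀ s ∈ Icc r R, ‖g s‖ ≤ (t * F s + (1 / t) * (ρO / s ^ 2)) / 2 := by
          intro s hs
          have hs0 : (0:ℝ) < s := lt_of_lt_of_le hr0 hs.1
          have hρs := hρ s (hsub hs)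
          set a := ‖g s‖ with ha
          have ha0 : 0 ≤ a := norm_nonneg _
          have hρs0 : ρ s ≠ 0 := ne_of_gt hρs.1
          have hts : t ≠ 0 := ne_of_gt ht
          have hss : s ≠ 0 := ne_of_gt hs0
          have hdiff : (t * ((1 / ρ s) * a ^ 2 * s ^ 2) + (1 / t) * (ρ s / s ^ 2)) - 2 * a
              = (t * s ^ 2 * a - ρ s) ^ 2 / (t * ρ s * s ^ 2) := by
            field_simp
            ring
          have hq : 0 ≤ (t * s ^ 2 * a - ρ s) ^ 2 / (t * ρ s * s ^ 2) := by
            have : (0:ℝ) < t * ρ s * s ^ 2 := by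
              have := hρs.1; positivity
            positivity
          have h1 : 2 * a ≤ t * ((1 / ρ s) * a ^ 2 * s ^ 2) + (1 / t) * (ρ s / s ^ 2) := by
            linarith [hq, hdiff.ge, hdiff.le]
          have h2 : (1 / t) * (ρ s / s ^ 2) ≤ (1 / t) * (ρO / s ^ 2) := by
            gcongr
            exact hρs.2
          simp only [hF]
          linarith
        have hRHSint : IntervalIntegrable
            (fun s => (t * F s + (1 / t) * (ρO / s ^ 2)) / 2) volume r R := by
          refine ContinuousOn.intervalIntegrable ?_
          rw [huIcc]
          exact (((hFc.mono hsub).const_smul t).add (hGc.const_smul (1/t))).div_const 2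
        have hmono : (∫ s in r..R, ‖g s‖) ≤
            ∫ s in r..R, (t * F s + (1 / t) * (ρO / s ^ 2)) / 2 := by
          refine integral_mono_on hrR ?_ hRHSint hpt
          refine ContinuousOn.intervalIntegrable ?_
          rw [huIcc]
          exact (hgc.mono hsub).norm
        have hval : (∫ s in r..R, (t * F s + (1 / t) * (ρO / s ^ 2)) / 2)
            = (t * (∫ s in r..R, F s) + (1 / t) * (ρO * (1 / r - 1 / R))) / 2 := by
          rw [intervalIntegral.integral_div, intervalIntegral.integral_add
            ((hFint r R ⟨hr0.le, hrR⟩ ⟨hR.le, le_rfl⟩).const_mul t)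
            (hGint.const_mul (1/t)),
            intervalIntegral.integral_const_mul, intervalIntegral.integral_const_mul,
            hGval]
        have hnb : ‖ψ r‖ ≤ (t * N + (1 / t) * (ρO * (1 / r - 1 / R))) / 2 := by
          calc ‖ψ r‖ = ‖∫ s in r..R, g s‖ := hnorm
            _ ≤ ∫ s in r..R, ‖g s‖ := norm_integral_le_integral_norm hrR
            _ ≤ (t * (∫ s in r..R, F s) + (1 / t) * (ρO * (1 / r - 1 / R))) / 2 := by
                rw [← hval]; exact hmono
            _ ≤ (t * N + (1 / t) * (ρO * (1 / r - 1 / R))) / 2 := by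
                have := mul_le_mul_of_nonneg_left hFle ht.le
                linarith
        rw [one_div, inv_mul_eq_div] at hnb
        linarith
      have hB0 : 0 ≤ ρO * (1 / r - 1 / R) := by
        have : 1 / R ≤ 1 / r := one_div_le_one_div_of_le hr0 hrR
        have : 0 ≤ 1 / r - 1 / R := by linarith
        positivity
      exact stmt13_quad (norm_nonneg _) hN0 hB0 hstep
    -- integrate the pointwise bound
    have hptD : ∀ r ∈ Icc (0:ℝ) R, ‖ψ r‖ ^ 2 * r ^ 2 ≤ N * ρO * (r - r ^ 2 / R) := by
      intro r hr
      rcases eq_or_lt_of_le hr.1 with h0 | h0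
      · rw [← h0]; norm_num
      · have hk := key r ⟨h0, hr.2⟩
        have h1 : ‖ψ r‖ ^ 2 * r ^ 2 ≤ (N * (ρO * (1 / r - 1 / R))) * r ^ 2 :=
          mul_le_mul_of_nonneg_right hk (by positivity)
        have h2 : (N * (ρO * (1 / r - 1 / R))) * r ^ 2 = N * ρO * (r - r ^ 2 / R) := by
          field_simp
        linarith [h2 ▸ h1]
    have hDle : D ≤ N * ρO * (R ^ 2 / 6) := by
      have hint1 : IntervalIntegrable (fun r : ℝ => ‖ψ r‖ ^ 2 * r ^ 2) volume 0 R := by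
        refine ContinuousOn.intervalIntegrable ?_
        rw [uIcc_of_le hR.le]
        exact ((hψcont.norm).pow 2).mul (continuousOn_id.pow 2)
      have hint2 : IntervalIntegrable (fun r : ℝ => N * ρO * (r - r ^ 2 / R)) volume 0 R :=
        (continuous_const.mul (continuous_id.sub ((continuous_pow 2).div_const R))).intervalIntegrable 0 R
      have hm := integral_mono_on hR.le hint1 hint2 hptD
      have hval : (∫ r in (0:ℝ)..R, N * ρO * (r - r ^ 2 / R)) = N * ρO * (R ^ 2 / 6) := by
        rw [intervalIntegral.integral_const_mul, intervalIntegral.integral_sub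
          ((continuous_id'.intervalIntegrable 0 R : IntervalIntegrable (fun x : ℝ => x) volume 0 R))
          (((continuous_pow 2).div_const R).intervalIntegrable 0 R)]
        simp only [intervalIntegral.integral_div, integral_id, integral_pow]
        field_simp
        ring
      rw [hval] at hm
      exact hm
    -- conclude
    rw [hc, div_le_div_iff₀ (by positivity) hD0]
    nlinarith [hDle]
  exact lt_of_lt_of_le hcpos (le_csInf hne hlow)
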